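/- Let 𝓘 be a finite set, μ₁,…,μ_n nonzero elements of a finite cyclic group Ĉ (identified with Irr(𝔽_q^×) values) such that no nonempty subproduct of the μ's equals 1, and to each ι ∈ 𝓘 associate μ_ι, a product of some of the μᵢ, such that the μ_ι taken over all ι use each μᵢ exactly once. Then Σ_W μ(1,W) = (−1)^{|𝓘|−1}(|𝓘|−1)!, where the sum runs over all subgroups W of the symmetric group S(𝓘) acting transitively on 𝓘 and μ is the Möbius function of the lattice of subgroups of S(𝓘). -/

import Mathlib

noncomputable section

open Equiv Finset

namespace CrapoAux

variable {ι : Type} [Fintype ι] [DecidableEq ι]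

instance : Finite (Setoid ι) :=
  Finite.of_injective (fun s => (⇑s : ι → ι → Prop))
    (fun _ _ h => Setoid.ext fun {x y} => iff_of_eq (congrFun (congrFun h x) y))

/-- The setoid of being in the same cycle of a permutation. -/
def cycSetoid (τ : Equiv.Perm ι) : Setoid ι :=
  ⟨τ.SameCycle, ⟨fun x => Equiv.Perm.SameCycle.refl τ x,
    fun h => h.symm, fun h h' => h.trans h'⟩⟩

@[simp] lemma cycSetoid_rel (τ : Equiv.Perm ι) (x y : ι) :
    cycSetoid τ x y ↔ τ.SameCycle x y := Iff.rfl

/-- The "Young subgroup" of a setoid: permutations preserving each class. -/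
def young (π : Setoid ι) : Subgroup (Equiv.Perm ι) where
  carrier := {σ | ∀ x, π (σ x) x}
  one_mem' := fun x => π.refl x
  mul_mem' := fun {a b} ha hb x => π.trans (ha (b x)) (hb x)
  inv_mem' := fun {a} ha x => π.symm (by simpa using ha (a⁻¹ x))

lemma mem_young {π : Setoid ι} {σ : Equiv.Perm ι} :
    σ ∈ young π ↔ ∀ x, π (σ x) x := Iff.rfl

/-- The orbit setoid of a subgroup of permutations. -/
def orbSetoid (K : Subgroup (Equiv.Perm ι)) : Setoid ι :=
  ⟨fun x y => ∃ σ ∈ K, σ x = y,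
   ⟨fun x => ⟨1, K.one_mem, rfl⟩,
    fun {x y} h => by
      obtain ⟨σ, hσ, rfl⟩ := h
      exact ⟨σ⁻¹, K.inv_mem hσ, by simp⟩,
    fun {x y z} h h' => by
      obtain ⟨σ, hσ, rfl⟩ := h
      obtain ⟨σ', hσ', rfl⟩ := h'
      exact ⟨σ' * σ, K.mul_mem hσ' hσ, rfl⟩⟩⟩

@[simp] lemma orbSetoid_rel (K : Subgroup (Equiv.Perm ι)) (x y : ι) :
    orbSetoid K x y ↔ ∃ σ ∈ K, σ x = y := Iff.rfl

lemma le_young_iff {K : Subgroup (Equiv.Perm ι)} {π : Setoid ι} :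
    K ≤ young π ↔ orbSetoid K ≤ π := by
  constructor
  · intro h
    rw [Setoid.le_def]
    rintro x y ⟨σ, hσ, rfl⟩
    exact π.symm (h hσ x)
  · intro h σ hσ
    intro x
    exact Setoid.le_def.mp h ⟨σ⁻¹, K.inv_mem hσ, by simp⟩

lemma cycSetoid_le_iff {τ : Equiv.Perm ι} {π : Setoid ι} :
    cycSetoid τ ≤ π ↔ τ ∈ young π := by
  constructor
  · intro h x
    exact Setoid.le_def.mp h ⟨(-1 : ℤ), by simp⟩
  · intro h
    rw [Setoid.le_def]
    rintro x y ⟨i, rfl⟩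
    exact π.symm ((Subgroup.zpow_mem (young π) h i) x)

lemma swap_mem_young {π : Setoid ι} {x y : ι} (hxy : x ≠ y) (hrel : π x y) :
    Equiv.swap x y ∈ young π := by
  intro z
  rcases eq_or_ne z x with rfl | hzx
  · simpa [Equiv.swap_apply_left] using π.symm hrel
  rcases eq_or_ne z y with rfl | hzy
  · simpa [Equiv.swap_apply_right] using hrel
  · simpa [Equiv.swap_apply_of_ne_of_ne hzx hzy] using π.refl z

lemma exists_pair_of_ne_bot {π : Setoid ι} (hπ : π ≠ ⊥) :
    ∃ x y : ι, x ≠ y ∧ π x y := by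
  by_contra hxy
  push_neg at hxy
  apply hπ
  apply Setoid.ext
  intro a b
  simp only [Setoid.bot_def]
  constructor
  · intro hab
    by_contra hne
    exact hxy a b hne hab
  · rintro rfl
    exact π.refl a

lemma young_eq_bot_iff {π : Setoid ι} : young π = ⊥ ↔ π = ⊥ := by
  constructor
  · intro h
    by_contra hπ
    obtain ⟨x, y, hxy, hrel⟩ := exists_pair_of_ne_bot hπ
    have hs := swap_mem_young hxy hrel
    rw [h, Subgroup.mem_bot] at hs
    have hyx : y = x := by simpa using Equiv.ext_iff.mp hs x
    exact hxy hyx.symm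
  · rintro rfl
    apply le_antisymm _ bot_le
    intro σ hσ
    rw [Subgroup.mem_bot]
    ext x
    have := hσ x
    simp only [Setoid.bot_def] at this
    simpa using this

open scoped Classical in
lemma sum_sign_young (π : Setoid ι) :
    ∑ τ ∈ univ.filter (· ∈ young π), ((Equiv.Perm.sign τ : ℤˣ) : ℤ) =
      if π = ⊥ then 1 else 0 := by
  split_ifs with hπ
  · subst hπ
    have hfb : univ.filter (· ∈ young (⊥ : Setoid ι)) = {1} := by
      ext σ
      simp [young_eq_bot_iff.mpr rfl, Subgroup.mem_bot]
    rw [hfb]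
    simp
  · obtain ⟨x, y, hxy, hrel⟩ := exists_pair_of_ne_bot hπ
    have hs : Equiv.swap x y ∈ young π := swap_mem_young hxy hrel
    have key : ∑ τ ∈ univ.filter (· ∈ young π),
          ((Equiv.Perm.sign (Equiv.swap x y * τ) : ℤˣ) : ℤ) =
        ∑ τ ∈ univ.filter (· ∈ young π), ((Equiv.Perm.sign τ : ℤˣ) : ℤ) := by
      refine Finset.sum_equiv (Equiv.mulLeft (Equiv.swap x y)) ?_ ?_
      · intro τ
        simp only [Finset.mem_filter, Finset.mem_univ, true_and, Equiv.coe_mulLeft]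
        constructor
        · intro h; exact (young π).mul_mem hs h
        · intro h
          have := (young π).mul_mem ((young π).inv_mem hs) h
          rwa [inv_mul_cancel_left] at this
      · intro τ _
        rfl
    have hneg : ∀ τ : Equiv.Perm ι,
        ((Equiv.Perm.sign (Equiv.swap x y * τ) : ℤˣ) : ℤ) =
          -((Equiv.Perm.sign τ : ℤˣ) : ℤ) := by
      intro τ
      rw [map_mul, Equiv.Perm.sign_swap hxy]
      push_cast
      ring
    rw [Finset.sum_congr rfl (fun τ _ => hneg τ), Finset.sum_neg_distrib] at key
    linarith

lemma pow_mod_fix {τ : Equiv.Perm ι} {z : ι} {d : ℕ} (hfix : (τ ^ d) z = z) (m : ℕ) :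
    (τ ^ m) z = (τ ^ (m % d)) z := by
  conv_lhs => rw [← Nat.div_add_mod m d]
  rw [add_comm, pow_add, Equiv.Perm.mul_apply]
  congr 1
  generalize m / d = q
  induction q with
  | zero => simp
  | succ q ih => rw [Nat.mul_succ, pow_add, Equiv.Perm.mul_apply, hfix, ih]

lemma card_le_of_fix {τ : Equiv.Perm ι} (hτ : ∀ x y : ι, τ.SameCycle x y) {z : ι} {d : ℕ}
    (hd : 0 < d) (hfix : (τ ^ d) z = z) : Fintype.card ι ≤ d := by
  have hsub : (univ : Finset ι) ⊆ (Finset.range d).image (fun j => (τ ^ j) z) := by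
    intro y _
    obtain ⟨i, -, hi⟩ := (hτ z y).exists_pow_eq'
    refine Finset.mem_image.mpr ⟨i % d, Finset.mem_range.mpr (Nat.mod_lt _ hd), ?_⟩
    rw [← pow_mod_fix hfix, hi]
  calc Fintype.card ι = (univ : Finset ι).card := Finset.card_univ.symm
    _ ≤ _ := Finset.card_le_card hsub
    _ ≤ (Finset.range d).card := Finset.card_image_le
    _ = d := Finset.card_range d

lemma inj_aux {τ : Equiv.Perm ι} (hτ : ∀ x y : ι, τ.SameCycle x y) (x₀ : ι) :
    Function.Injective (fun k : Fin (Fintype.card ι) => (τ ^ (k : ℕ)) x₀) := by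
  have key : ∀ a b : Fin (Fintype.card ι), (a : ℕ) ≤ (b : ℕ) →
      (τ ^ (a : ℕ)) x₀ = (τ ^ (b : ℕ)) x₀ → a = b := by
    intro a b hab h
    rcases Nat.eq_zero_or_pos ((b : ℕ) - (a : ℕ)) with hd | hd
    · exact Fin.ext (by omega)
    · exfalso
      have hb : (b : ℕ) = ((b : ℕ) - (a : ℕ)) + (a : ℕ) := by omega
      rw [hb, pow_add, Equiv.Perm.mul_apply] at h
      have h2 := card_le_of_fix hτ hd h.symm
      have := b.isLt
      omega
  intro a b h
  rcases le_total (a : ℕ) (b : ℕ) with hab | hab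
  · exact key a b hab h
  · exact (key b a hab h.symm).symm

/-- The orbit map of a transitive permutation, as an equivalence. -/
def cycEquiv {τ : Equiv.Perm ι} (hτ : ∀ x y : ι, τ.SameCycle x y) (x₀ : ι) :
    Fin (Fintype.card ι) ≃ ι :=
  Equiv.ofBijective _ ((Fintype.bijective_iff_injective_and_card _).mpr
    ⟨inj_aux hτ x₀, Fintype.card_fin _⟩)

@[simp] lemma cycEquiv_apply {τ : Equiv.Perm ι} (hτ : ∀ x y : ι, τ.SameCycle x y) (x₀ : ι)
    (k : Fin (Fintype.card ι)) : cycEquiv hτ x₀ k = (τ ^ (k : ℕ)) x₀ := rfl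

lemma pow_card_fix {τ : Equiv.Perm ι} (hτ : ∀ x y : ι, τ.SameCycle x y) (x₀ : ι) :
    (τ ^ Fintype.card ι) x₀ = x₀ := by
  obtain ⟨j, hj⟩ := (cycEquiv hτ x₀).surjective ((τ ^ Fintype.card ι) x₀)
  rw [cycEquiv_apply] at hj
  have hjn := j.isLt
  rcases Nat.eq_zero_or_pos (j : ℕ) with h0 | h0
  · rw [← hj, h0, pow_zero, Equiv.Perm.one_apply]
  · exfalso
    have hsplit : Fintype.card ι = (Fintype.card ι - (j : ℕ)) + (j : ℕ) := by omega
    have h2 : (τ ^ (Fintype.card ι - (j : ℕ))) ((τ ^ (j : ℕ)) x₀) = (τ ^ (j : ℕ)) x₀ := by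
      rw [← Equiv.Perm.mul_apply, ← pow_add, ← hsplit, hj]
    have h3 := card_le_of_fix hτ (by omega) h2
    omega

lemma permCongr_pow {β : Type} (e : β ≃ ι) (f : Equiv.Perm β) (k : ℕ) :
    (e.permCongr f) ^ k = e.permCongr (f ^ k) := by
  induction k with
  | zero => ext x; simp
  | succ k ih => rw [pow_succ, pow_succ, ih]; ext x; simp

open Fin.NatCast in
lemma rot_pow {m : ℕ} (j : Fin (m + 1)) (k : ℕ) :
    ((finRotate (m + 1)) ^ k) j = j + (k : Fin (m + 1)) := by
  induction k with
  | zero => simp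
  | succ k ih =>
      rw [pow_succ', Equiv.Perm.mul_apply, ih, finRotate_succ_apply, Nat.cast_add, Nat.cast_one,
        add_assoc]

lemma rot_transitive {m : ℕ} (e : Fin (m + 1) ≃ ι) :
    ∀ x y : ι, (e.permCongr (finRotate (m + 1))).SameCycle x y := by
  intro x y
  refine ⟨((((e.symm y - e.symm x) : Fin (m + 1)) : ℕ) : ℤ), ?_⟩
  have h2 : e.symm x + (e.symm y - e.symm x) = e.symm y := by abel
  rw [zpow_natCast, permCongr_pow, Equiv.permCongr_apply, rot_pow,
    Fin.cast_val_eq_self, h2, Equiv.apply_symm_apply]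

/-- Bijection between transitive permutations and pointed enumerations. -/
def cycCount {m : ℕ} (hm : Fintype.card ι = m + 1) (x₀ : ι) :
    {τ : Equiv.Perm ι // ∀ x y : ι, τ.SameCycle x y} ≃ {e : Fin (m + 1) ≃ ι // e 0 = x₀} where
  toFun τ := ⟨(finCongr hm.symm).trans (cycEquiv τ.2 x₀), by simp⟩
  invFun e := ⟨Equiv.permCongr e.1 (finRotate (m + 1)), rot_transitive e.1⟩
  left_inv τ := by
    apply Subtype.ext
    ext x
    set e' := (finCongr hm.symm).trans (cycEquiv τ.2 x₀) with he'
    have happ : ∀ k : Fin (m + 1), e' k = (τ.1 ^ (k : ℕ)) x₀ := by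
      intro k; simp [he']
    have hfix : (τ.1 ^ (m + 1)) x₀ = x₀ := by rw [← hm]; exact pow_card_fix τ.2 x₀
    rw [Equiv.permCongr_apply]
    set k := e'.symm x with hk
    have hx : x = e' k := (e'.apply_symm_apply x).symm
    have hmod : ((k + 1 : Fin (m + 1)) : ℕ) = ((k : ℕ) + 1) % (m + 1) := by
      rw [Fin.val_add, Fin.val_one']
      conv_rhs => rw [Nat.add_mod]
      rw [Nat.mod_eq_of_lt k.isLt]
    rw [finRotate_succ_apply, happ, hmod, ← pow_mod_fix hfix, pow_succ', Equiv.Perm.mul_apply]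
    exact congrArg τ.1 (by rw [hx, happ])
  right_inv e := by
    apply Subtype.ext
    ext k
    have h0 : e.1.symm x₀ = 0 := e.1.symm_apply_eq.mpr e.2.symm
    simp only [Equiv.trans_apply, cycEquiv_apply, finCongr_apply, Fin.coe_cast]
    rw [permCongr_pow, Equiv.permCongr_apply, h0, rot_pow, zero_add, Fin.cast_val_eq_self]

lemma card_fullCycles {m : ℕ} (hm : Fintype.card ι = m + 1) :
    Fintype.card {τ : Equiv.Perm ι // ∀ x y : ι, τ.SameCycle x y} = m.factorial := by
  classical
  have hpos : 0 < Fintype.card ι := by omega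
  obtain ⟨x₀⟩ : Nonempty ι := Fintype.card_pos_iff.mp hpos
  have e₀ : (({0} : Set (Fin (m + 1))) : Type) ≃ (({x₀} : Set ι) : Type) :=
    Equiv.ofUnique _ _
  have hiff : ∀ e : Fin (m + 1) ≃ ι, e 0 = x₀ ↔ ∀ x : ({0} : Set (Fin (m + 1))), e x = e₀ x := by
    intro e
    constructor
    · intro h x
      have hx : (x : Fin (m + 1)) = 0 := x.2
      have he₀ : ((e₀ x : ι) : ι) = x₀ := (e₀ x).2
      rw [hx, h, he₀]
    · intro h
      have := h ⟨0, rfl⟩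
      rw [this, ((e₀ ⟨0, rfl⟩).2 : ((e₀ ⟨0, rfl⟩ : ι)) = x₀)]
  have h1 : {e : Fin (m + 1) ≃ ι // e 0 = x₀} ≃
      ((({0}ᶜ : Set (Fin (m + 1))) : Type) ≃ (({x₀}ᶜ : Set ι) : Type)) :=
    (Equiv.subtypeEquivRight hiff).trans (Equiv.Set.compl e₀)
  have hc1 : Fintype.card (({0}ᶜ : Set (Fin (m + 1))) : Type) = m := by
    rw [Fintype.card_compl_set]
    simp
  have hc2 : Fintype.card (({x₀}ᶜ : Set ι) : Type) = m := by
    rw [Fintype.card_compl_set]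
    simp [hm]
  have e2 : (({0}ᶜ : Set (Fin (m + 1))) : Type) ≃ (({x₀}ᶜ : Set ι) : Type) :=
    Fintype.equivOfCardEq (by rw [hc1, hc2])
  rw [Fintype.card_congr ((cycCount hm x₀).trans h1), Fintype.card_equiv e2, hc1]

lemma sign_fullCycle {τ : Equiv.Perm ι} (hτ : ∀ x y : ι, τ.SameCycle x y) :
    ((Equiv.Perm.sign τ : ℤˣ) : ℤ) = (-1) ^ (Fintype.card ι - 1) := by
  rcases le_or_gt (Fintype.card ι) 1 with h1 | h1
  · have hcard := Fintype.card_le_one_iff.mp h1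
    have hτ1 : τ = 1 := Equiv.ext fun x => by rw [Equiv.Perm.one_apply]; exact hcard _ _
    have h0 : Fintype.card ι - 1 = 0 := by omega
    rw [hτ1, map_one, h0, pow_zero, Units.val_one]
  · have hnt : τ ≠ 1 := by
      obtain ⟨x, y, hxy⟩ := Fintype.exists_pair_of_one_lt_card h1
      intro h1'
      apply hxy
      have := hτ x y
      rw [h1'] at this
      exact Equiv.Perm.sameCycle_one.mp this
    obtain ⟨x, hx⟩ : ∃ x, τ x ≠ x := by
      by_contra h
      push_neg at h
      exact hnt (Equiv.ext fun x => by simp [h x])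
    have hcyc : τ.IsCycle := ⟨x, hx, fun y _ => hτ x y⟩
    have hsupp : τ.support = univ := by
      ext z
      simp only [Equiv.Perm.mem_support, Finset.mem_univ, iff_true]
      intro hz
      obtain ⟨w, v, hwv⟩ := Fintype.exists_pair_of_one_lt_card h1
      have hu : ∃ u, u ≠ z := by
        rcases eq_or_ne w z with rfl | h
        · exact ⟨v, fun hv => hwv hv.symm⟩
        · exact ⟨w, h⟩
      obtain ⟨u, hu⟩ := hu
      obtain ⟨i, hi⟩ := hτ z u
      rw [Equiv.Perm.zpow_apply_eq_self_of_apply_eq_self hz] at hi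
      exact hu hi.symm
    have hsign := hcyc.sign
    rw [hsupp, Finset.card_univ] at hsign
    rw [hsign]
    have hc : Fintype.card ι = (Fintype.card ι - 1) + 1 := by omega
    rw [hc]
    push_cast
    rw [pow_succ]
    ring

lemma finsum_setOf {α : Type} [Fintype α] (p : α → Prop) [DecidablePred p] (f : α → ℤ) :
    ∑ᶠ i ∈ {x | p x}, f i = ∑ i ∈ univ.filter p, f i := by
  rw [← finsum_mem_coe_finset]
  congr 1
  ext x
  simp

end CrapoAux

open CrapoAux

/-- Crapo's closure theorem for the subgroup lattice of a symmetric group: for the Möbius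
function `μ` of the lattice of subgroups of `S(𝓘)` (characterized by `μ(⊥) = 1` and
`Σ_{K ≤ W} μ(K) = 0` for `W ≠ ⊥`), the sum of `μ(⊥, W)` over all transitive subgroups `W`
equals `(−1)^{|𝓘|−1}(|𝓘|−1)!`. -/
theorem crapo_transitive_subgroups {ι : Type} [Fintype ι] [DecidableEq ι] [Nonempty ι]
    (μ : Subgroup (Equiv.Perm ι) → ℤ)
    (hbot : μ ⊥ = 1)
    (hrec : ∀ W : Subgroup (Equiv.Perm ι), W ≠ ⊥ →
      ∑ᶠ K ∈ {K : Subgroup (Equiv.Perm ι) | K ≤ W}, μ K = 0) :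
    ∑ᶠ W ∈ {W : Subgroup (Equiv.Perm ι) | ∀ x y : ι, ∃ σ ∈ W, σ x = y}, μ W =
      (-1) ^ (Fintype.card ι - 1) * (Nat.factorial (Fintype.card ι - 1) : ℤ) := by
  classical
  letI : Fintype (Setoid ι) := Fintype.ofFinite _
  letI : Fintype (Subgroup (Equiv.Perm ι)) := Fintype.ofFinite _
  obtain ⟨m, hm⟩ : ∃ m, Fintype.card ι = m + 1 :=
    ⟨Fintype.card ι - 1, by have := Fintype.card_pos (α := ι); omega⟩
  set f : Setoid ι → ℤ := fun π => ∑ K ∈ univ.filter (fun K => orbSetoid K = π), μ K with hf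
  set g : Setoid ι → ℤ :=
    fun π => ∑ τ ∈ univ.filter (fun τ => cycSetoid τ = π),
      ((Equiv.Perm.sign τ : ℤˣ) : ℤ) with hg
  have hrec' : ∀ W : Subgroup (Equiv.Perm ι), W ≠ ⊥ →
      ∑ K ∈ univ.filter (fun K => K ≤ W), μ K = 0 := by
    intro W hW
    have h := hrec W hW
    rwa [finsum_setOf (fun K => K ≤ W) μ] at h
  -- the sum of f over σ ≤ π
  have hF : ∀ π : Setoid ι, ∑ σ ∈ univ.filter (· ≤ π), f σ = if π = ⊥ then 1 else 0 := by
    intro π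
    have hstep : ∀ σ ∈ univ.filter (· ≤ π),
        f σ = ∑ K ∈ (univ.filter (fun K => orbSetoid K ≤ π)).filter
          (fun K => orbSetoid K = σ), μ K := by
      intro σ hσ
      show (∑ K ∈ univ.filter (fun K => orbSetoid K = σ), μ K) = _
      refine Finset.sum_congr ?_ (fun _ _ => rfl)
      ext K
      simp only [Finset.mem_filter, Finset.mem_univ, true_and]
      constructor
      · intro h
        exact ⟨h ▸ (Finset.mem_filter.mp hσ).2, h⟩
      · exact And.right
    calc ∑ σ ∈ univ.filter (· ≤ π), f σ
        = ∑ σ ∈ univ.filter (· ≤ π), ∑ K ∈ (univ.filter (fun K => orbSetoid K ≤ π)).filter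
            (fun K => orbSetoid K = σ), μ K := Finset.sum_congr rfl hstep
      _ = ∑ K ∈ univ.filter (fun K => orbSetoid K ≤ π), μ K := by
          refine Finset.sum_fiberwise_of_maps_to ?_ μ
          intro K hK
          simp only [Finset.mem_filter, Finset.mem_univ, true_and] at hK ⊢
          exact hK
      _ = ∑ K ∈ univ.filter (fun K => K ≤ young π), μ K := by
          congr 1
          ext K
          simp [le_young_iff]
      _ = if π = ⊥ then 1 else 0 := by
          split_ifs with hπ
          · subst hπ
            have : univ.filter (fun K : Subgroup (Equiv.Perm ι) => K ≤ young ⊥) = {⊥} := by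
              ext K
              simp [young_eq_bot_iff.mpr rfl, le_bot_iff]
            rw [this, Finset.sum_singleton, hbot]
          · exact hrec' _ (fun h => hπ (young_eq_bot_iff.mp h))
  have hG : ∀ π : Setoid ι, ∑ σ ∈ univ.filter (· ≤ π), g σ = if π = ⊥ then 1 else 0 := by
    intro π
    have hstep : ∀ σ ∈ univ.filter (· ≤ π),
        g σ = ∑ τ ∈ (univ.filter (fun τ : Equiv.Perm ι => cycSetoid τ ≤ π)).filter
          (fun τ => cycSetoid τ = σ), ((Equiv.Perm.sign τ : ℤˣ) : ℤ) := by
      intro σ hσ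
      show (∑ τ ∈ univ.filter (fun τ => cycSetoid τ = σ), ((Equiv.Perm.sign τ : ℤˣ) : ℤ)) = _
      refine Finset.sum_congr ?_ (fun _ _ => rfl)
      ext τ
      simp only [Finset.mem_filter, Finset.mem_univ, true_and]
      constructor
      · intro h
        exact ⟨h ▸ (Finset.mem_filter.mp hσ).2, h⟩
      · exact And.right
    calc ∑ σ ∈ univ.filter (· ≤ π), g σ
        = ∑ σ ∈ univ.filter (· ≤ π), ∑ τ ∈ (univ.filter
            (fun τ : Equiv.Perm ι => cycSetoid τ ≤ π)).filter (fun τ => cycSetoid τ = σ),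
            ((Equiv.Perm.sign τ : ℤˣ) : ℤ) := Finset.sum_congr rfl hstep
      _ = ∑ τ ∈ univ.filter (fun τ : Equiv.Perm ι => cycSetoid τ ≤ π),
            ((Equiv.Perm.sign τ : ℤˣ) : ℤ) := by
          refine Finset.sum_fiberwise_of_maps_to ?_ _
          intro τ hτ
          simp only [Finset.mem_filter, Finset.mem_univ, true_and] at hτ ⊢
          exact hτ
      _ = ∑ τ ∈ univ.filter (· ∈ young π), ((Equiv.Perm.sign τ : ℤˣ) : ℤ) := by
          congr 1
          ext τ
          simp [cycSetoid_le_iff]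
      _ = if π = ⊥ then 1 else 0 := sum_sign_young π
  have huniq : ∀ π : Setoid ι, f π = g π := by
    have wf : WellFounded ((· < ·) : Setoid ι → Setoid ι → Prop) := wellFounded_lt
    intro π
    induction π using WellFounded.induction wf with
    | _ π ih =>
      have h1 := hF π
      have h2 := hG π
      have hins : univ.filter (· ≤ π) = insert π (univ.filter (· < π)) := by
        ext σ
        simp only [Finset.mem_filter, Finset.mem_univ, true_and, Finset.mem_insert]
        rw [le_iff_lt_or_eq]
        tauto
      have hnotmem : π ∉ univ.filter (· < π) := by simp
      rw [hins, Finset.sum_insert hnotmem] at h1 h2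
      have hrest : ∑ σ ∈ univ.filter (· < π), f σ = ∑ σ ∈ univ.filter (· < π), g σ :=
        Finset.sum_congr rfl fun σ hσ => ih σ (by simpa using hσ)
      rw [hrest] at h1
      linarith
  have hl : ∑ᶠ W ∈ {W : Subgroup (Equiv.Perm ι) | ∀ x y : ι, ∃ σ ∈ W, σ x = y}, μ W = f ⊤ := by
    rw [finsum_setOf (fun W : Subgroup (Equiv.Perm ι) => ∀ x y : ι, ∃ σ ∈ W, σ x = y) μ, hf]
    congr 1
    ext K
    simp only [Finset.mem_filter, Finset.mem_univ, true_and]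
    rw [Setoid.eq_top_iff]
    simp
  rw [hl, huniq ⊤]
  show (∑ τ ∈ univ.filter (fun τ : Equiv.Perm ι => cycSetoid τ = ⊤),
    ((Equiv.Perm.sign τ : ℤˣ) : ℤ)) = _
  have hset : univ.filter (fun τ : Equiv.Perm ι => cycSetoid τ = ⊤) =
      univ.filter (fun τ : Equiv.Perm ι => ∀ x y : ι, τ.SameCycle x y) := by
    ext τ
    simp only [Finset.mem_filter, Finset.mem_univ, true_and]
    rw [Setoid.eq_top_iff]
    simp
  rw [hset]
  rw [Finset.sum_congr rfl (fun τ hτ =>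
    sign_fullCycle (by simpa using (Finset.mem_filter.mp hτ).2))]
  rw [Finset.sum_const, nsmul_eq_mul]
  have hcard : (univ.filter (fun τ : Equiv.Perm ι => ∀ x y : ι, τ.SameCycle x y)).card =
      m.factorial := by
    rw [← Fintype.card_subtype]
    exact card_fullCycles hm
  rw [hcard]
  have h1 : Fintype.card ι - 1 = m := by omega
  rw [h1, mul_comm]
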